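/- Let 0 < α ≤ 1, j ≥ 1 an integer, and let b ∈ L^∞(R^n) be supported in the cube Q = Q(x_0, r) with ∫_{R^n} b(x) dx = 0. Then for every x with |x − x_0| > √n · r, the varying-aperture intrinsic square function satisfies S_{α,2^j}(b)(x) ≤ C · 2^{j(3n+2α)/2} · ‖b‖_{L^∞} · r^{n+α} / |x − x_0|^{n+α}, where C depends only on n and α. -/

import Mathlib

open MeasureTheory Metric Set

noncomputable section

abbrev En (n : ℕ) := EuclideanSpace ℝ (Fin n)

/-- The axis-parallel cube centered at `x0` with side length `r`. -/
def cube (n : ℕ) (x0 : En n) (r : ℝ) : Set (En n) := {x | ∀ i, |x i - x0 i| ≤ r / 2}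

/-- Weighted measure of a set: `w(E) = ∫_E w`. -/
def wSet (n : ℕ) (w : En n → ℝ) (E : Set (En n)) : ℝ := ∫ x in E, w x

/-- The Muckenhoupt `A_q` integral condition for `q > 1` with constant `C`. -/
def AqCond (n : ℕ) (w : En n → ℝ) (q C : ℝ) : Prop :=
  ∀ (x0 : En n) (r : ℝ), 0 < r →
    ((∫ x in cube n x0 r, w x) / r ^ n) *
      ((∫ x in cube n x0 r, w x ^ (-(1 / (q - 1)))) / r ^ n) ^ (q - 1) ≤ C

/-- The Muckenhoupt `A_1` condition with constant `C`. -/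
def A1Cond (n : ℕ) (w : En n → ℝ) (C : ℝ) : Prop :=
  ∀ (x0 : En n) (r : ℝ), 0 < r →
    (∫ x in cube n x0 r, w x) / r ^ n ≤
      C * essInf w (volume.restrict (cube n x0 r))

/-- `w` is an `A_q` weight (`q ≥ 1`) with constant `C`. -/
def IsAq (n : ℕ) (w : En n → ℝ) (q C : ℝ) : Prop :=
  (∀ x, 0 ≤ w x) ∧ LocallyIntegrable w ∧
    ((q = 1 ∧ A1Cond n w C) ∨ (1 < q ∧ AqCond n w q C))

/-- The dilation `φ_t(x) = t^{-n} φ(x/t)`. -/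
def dilate (n : ℕ) (φ : En n → ℝ) (t : ℝ) (x : En n) : ℝ :=
  t ^ (-(n : ℝ)) * φ (t⁻¹ • x)

/-- The family `C_α`: supported in the unit ball, zero mean, `α`-Hölder constant ≤ 1. -/
def Calpha (n : ℕ) (α : ℝ) : Set (En n → ℝ) :=
  {φ | (∀ x, 1 < ‖x‖ → φ x = 0) ∧ (∫ x, φ x) = 0 ∧
    ∀ x x', |φ x - φ x'| ≤ ‖x - x'‖ ^ α}

/-- `A_α(f)(y,t) = sup_{φ ∈ C_α} |f * φ_t(y)|`. -/
def Aalpha (n : ℕ) (α : ℝ) (f : En n → ℝ) (y : En n) (t : ℝ) : ℝ :=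
  sSup {v | ∃ φ ∈ Calpha n α, v = |∫ z, f z * dilate n φ t (y - z)|}

/-- The varying-aperture intrinsic square function `S_{α,β}(f)`. -/
def SalphaBeta (n : ℕ) (α β : ℝ) (f : En n → ℝ) (x : En n) : ℝ :=
  Real.sqrt (∫ t in Ioi (0 : ℝ), ∫ y in ball x (β * t),
    (Aalpha n α f y t) ^ 2 / t ^ (n + 1))

/-- The intrinsic square function `S_α(f)` (aperture one). -/
def Salpha (n : ℕ) (α : ℝ) (f : En n → ℝ) (x : En n) : ℝ :=
  SalphaBeta n α 1 f x

/-- The intrinsic `g^*_λ` function. -/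
def gStar (n : ℕ) (α lam : ℝ) (f : En n → ℝ) (x : En n) : ℝ :=
  Real.sqrt (∫ t in Ioi (0 : ℝ), ∫ y,
    (t / (t + dist x y)) ^ (lam * n) * (Aalpha n α f y t) ^ 2 / t ^ (n + 1))

/-- The intrinsic Littlewood–Paley `g`-function. -/
def gLittle (n : ℕ) (α : ℝ) (f : En n → ℝ) (x : En n) : ℝ :=
  Real.sqrt (∫ t in Ioi (0 : ℝ), (Aalpha n α f x t) ^ 2 / t)

lemma zero_mem_Calpha (n : ℕ) (α : ℝ) : (0 : En n → ℝ) ∈ Calpha n α := by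
  refine ⟨fun x _ => rfl, by simp, fun x x' => by
    simp [Real.rpow_nonneg (norm_nonneg _)]⟩

lemma zero_mem_A (n : ℕ) (α : ℝ) (f : En n → ℝ) (y : En n) (t : ℝ) :
    (0:ℝ) ∈ {v | ∃ φ ∈ Calpha n α, v = |∫ z, f z * dilate n φ t (y - z)|} := by
  exact ⟨0, zero_mem_Calpha n α, by simp [dilate]⟩

lemma continuous_of_holder {n : ℕ} {α : ℝ} (hα : 0 < α) {φ : En n → ℝ}
    (h : ∀ x x', |φ x - φ x'| ≤ ‖x - x'‖ ^ α) : Continuous φ := by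
  rw [Metric.continuous_iff]
  intro x ε hε
  refine ⟨ε ^ (1/α), Real.rpow_pos_of_pos hε _, fun x' hx' => ?_⟩
  have h1 : |φ x' - φ x| ≤ ‖x' - x‖ ^ α := h x' x
  have h2 : ‖x' - x‖ ^ α < (ε ^ (1/α)) ^ α := by
    apply Real.rpow_lt_rpow (norm_nonneg _) _ hα
    simpa [dist_eq_norm] using hx'
  have h3 : (ε ^ (1/α)) ^ α = ε := by
    rw [← Real.rpow_mul hε.le, one_div, inv_mul_cancel₀ hα.ne', Real.rpow_one]
  calc dist (φ x') (φ x) = |φ x' - φ x| := Real.dist_eq _ _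
    _ < ε := by linarith

lemma measurableSet_cube {n : ℕ} (x0 : En n) (r : ℝ) : MeasurableSet (cube n x0 r) := by
  have : cube n x0 r = ⋂ i, {x : En n | |x i - x0 i| ≤ r / 2} := by
    ext x; simp [cube, Set.mem_iInter]
  rw [this]
  refine MeasurableSet.iInter fun i => ?_
  have hc : Continuous fun x : En n => |x i - x0 i| := by
    have : Continuous fun x : En n => x i := (EuclideanSpace.proj (𝕜 := ℝ) i).continuous
    exact (this.sub continuous_const).abs
  exact measurableSet_le hc.measurable measurable_const

lemma norm_le_of_mem_cube {n : ℕ} {x0 : En n} {r : ℝ} (hr : 0 ≤ r) {z : En n}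
    (hz : z ∈ cube n x0 r) : ‖z - x0‖ ≤ Real.sqrt n * (r/2) := by
  have : ‖z - x0‖ = Real.sqrt (∑ i, ‖(z - x0) i‖ ^ 2) := EuclideanSpace.norm_eq _
  rw [this]
  have hb : (∑ i, ‖(z - x0) i‖ ^ 2) ≤ n * (r/2)^2 := by
    calc (∑ i, ‖(z - x0) i‖ ^ 2) ≤ ∑ _i : Fin n, (r/2)^2 := by
          apply Finset.sum_le_sum
          intro i _
          have h1 : ‖(z - x0) i‖ = |z i - x0 i| := by
            simp [PiLp.sub_apply, Real.norm_eq_abs]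
          rw [h1]
          have := hz i
          have := abs_nonneg (z i - x0 i)
          nlinarith
      _ = n * (r/2)^2 := by simp [Finset.sum_const, mul_comm]
  calc Real.sqrt (∑ i, ‖(z - x0) i‖ ^ 2) ≤ Real.sqrt (n * (r/2)^2) := Real.sqrt_le_sqrt hb
    _ = Real.sqrt n * (r/2) := by
        rw [Real.sqrt_mul (by positivity), Real.sqrt_sq (by positivity)]

def vB (n : ℕ) : ℝ := (volume (ball (0 : En n) 1)).toReal

lemma cube_subset_closedBall {n : ℕ} (x0 : En n) {r : ℝ} (hr : 0 ≤ r) :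
    cube n x0 r ⊆ closedBall x0 (Real.sqrt n * (r/2)) := fun z hz => by
  rw [mem_closedBall, dist_eq_norm]; exact norm_le_of_mem_cube hr hz

lemma volume_cube_lt_top {n : ℕ} (x0 : En n) {r : ℝ} (hr : 0 ≤ r) :
    volume (cube n x0 r) < ⊤ :=
  lt_of_le_of_lt (measure_mono (cube_subset_closedBall x0 hr)) measure_closedBall_lt_top

lemma integrable_of_bdd_supp {n : ℕ} {b : En n → ℝ} {M r : ℝ} {x0 : En n} (hr : 0 ≤ r)
    (hb : Measurable b) (hbM : ∀ z, |b z| ≤ M) (hsupp : ∀ z ∉ cube n x0 r, b z = 0) :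
    Integrable b := by
  apply Integrable.mono' (g := (cube n x0 r).indicator fun _ => M)
  · rw [integrable_indicator_iff (measurableSet_cube x0 r)]
    exact integrableOn_const (volume_cube_lt_top x0 hr).ne
  · exact hb.aestronglyMeasurable
  · refine Filter.Eventually.of_forall fun z => ?_
    by_cases hz : z ∈ cube n x0 r
    · simpa [Set.indicator_of_mem hz] using hbM z
    · simp [Set.indicator_of_notMem hz, hsupp z hz]

lemma volume_cube_toReal_le {n : ℕ} (hn : 1 ≤ n) (x0 : En n) {r : ℝ} (hr : 0 < r) :
    (volume (cube n x0 r)).toReal ≤ (Real.sqrt n * r) ^ (n : ℝ) * vB n := by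
  haveI : Nontrivial (En n) := by
    refine Module.nontrivial_of_finrank_pos (R := ℝ) ?_
    rw [finrank_euclideanSpace_fin]; omega
  have hs : (0:ℝ) < Real.sqrt n := Real.sqrt_pos.2 (by exact_mod_cast Nat.lt_of_lt_of_le Nat.zero_lt_one hn)
  have hsub : cube n x0 r ⊆ ball x0 (Real.sqrt n * r) := by
    refine subset_trans (cube_subset_closedBall x0 hr.le) ?_
    apply closedBall_subset_ball
    nlinarith
  have hball : volume (ball x0 (Real.sqrt n * r)) =
      ENNReal.ofReal ((Real.sqrt n * r) ^ (Module.finrank ℝ (En n))) * volume (ball (0 : En n) 1) :=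
    Measure.addHaar_ball volume x0 (by positivity)
  calc (volume (cube n x0 r)).toReal
      ≤ (volume (ball x0 (Real.sqrt n * r))).toReal := by
        apply ENNReal.toReal_mono _ (measure_mono hsub)
        rw [hball]
        exact (ENNReal.mul_lt_top ENNReal.ofReal_lt_top measure_ball_lt_top).ne
    _ = (Real.sqrt n * r) ^ (n:ℝ) * vB n := by
        rw [hball, ENNReal.toReal_mul, ENNReal.toReal_ofReal (by positivity), vB,
          finrank_euclideanSpace_fin, Real.rpow_natCast]

lemma Aalpha_le_bound {n : ℕ} (hn : 1 ≤ n) {α : ℝ} (hα0 : 0 < α) {b : En n → ℝ} {M : ℝ}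
    {x0 : En n} {r : ℝ} (hr : 0 < r) (hb : Measurable b) (hbM : ∀ z, |b z| ≤ M)
    (hsupp : ∀ z ∉ cube n x0 r, b z = 0) (hmean : (∫ z, b z) = 0)
    (y : En n) {t : ℝ} (ht : 0 < t) :
    Aalpha n α b y t ≤
      (Real.sqrt n * r) ^ ((n:ℝ) + α) * vB n * M * t ^ (-((n:ℝ) + α)) := by
  have hM0 : 0 ≤ M := le_trans (abs_nonneg _) (hbM 0)
  have hs : (0:ℝ) < Real.sqrt n := Real.sqrt_pos.2 (by exact_mod_cast Nat.lt_of_lt_of_le Nat.zero_lt_one hn)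
  have hvB : 0 ≤ vB n := ENNReal.toReal_nonneg
  apply Real.sSup_le _ (by positivity)
  rintro v ⟨φ, ⟨hφ1, hφ2, hφ3⟩, rfl⟩
  have hφc : Continuous φ := continuous_of_holder hα0 hφ3
  set c : ℝ := dilate n φ t (y - x0) with hc
  set h : En n → ℝ := fun z => b z * (dilate n φ t (y - z) - c) with hh
  -- measurability of dilate composed
  have hdc : Continuous fun z : En n => dilate n φ t (y - z) := by
    apply continuous_const.mul
    exact hφc.comp ((continuous_const.sub continuous_id).const_smul t⁻¹)
  -- the pointwise bound on h
  set cst : ℝ := M * ((Real.sqrt n * r) ^ α * t ^ (-((n:ℝ) + α))) with hcst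
  have key : ∀ z, ‖h z‖ ≤ (cube n x0 r).indicator (fun _ => cst) z := by
    intro z
    by_cases hz : z ∈ cube n x0 r
    · rw [Set.indicator_of_mem hz]
      have h1 : ‖h z‖ = |b z| * (t ^ (-(n:ℝ)) * |φ (t⁻¹ • (y - z)) - φ (t⁻¹ • (y - x0))|) := by
        rw [hh]
        simp only [hc, norm_mul, Real.norm_eq_abs, dilate, ← mul_sub, abs_mul,
          abs_of_pos (Real.rpow_pos_of_pos ht _)]
      have h2 : |φ (t⁻¹ • (y - z)) - φ (t⁻¹ • (y - x0))| ≤ (t⁻¹ * (Real.sqrt n * r)) ^ α := by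
        refine le_trans (hφ3 _ _) ?_
        have e1 : ‖t⁻¹ • (y - z) - t⁻¹ • (y - x0)‖ = t⁻¹ * ‖z - x0‖ := by
          rw [← smul_sub, norm_smul, Real.norm_eq_abs, abs_of_pos (inv_pos.2 ht)]
          congr 1
          rw [show y - z - (y - x0) = x0 - z by abel, norm_sub_rev]
        rw [e1]
        apply Real.rpow_le_rpow (by positivity) _ hα0.le
        have := norm_le_of_mem_cube hr.le hz
        have h3 : ‖z - x0‖ ≤ Real.sqrt n * r := by nlinarith
        exact mul_le_mul_of_nonneg_left h3 (inv_pos.2 ht).le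
      calc ‖h z‖ ≤ M * (t ^ (-(n:ℝ)) * (t⁻¹ * (Real.sqrt n * r)) ^ α) := by
            rw [h1]
            have : (0:ℝ) ≤ t ^ (-(n:ℝ)) := (Real.rpow_pos_of_pos ht _).le
            exact mul_le_mul (hbM z) (mul_le_mul_of_nonneg_left h2 this)
              (by positivity) hM0
        _ = cst := by
            have e2 : t ^ (-(n:ℝ)) * (t⁻¹ ^ α * (Real.sqrt n * r) ^ α)
                = (Real.sqrt n * r) ^ α * t ^ (-((n:ℝ)+α)) := by
              rw [Real.inv_rpow ht.le, ← Real.rpow_neg ht.le, neg_add, Real.rpow_add ht]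
              ring
            rw [hcst, Real.mul_rpow (inv_nonneg.2 ht.le) (by positivity), e2]
    · rw [Set.indicator_of_notMem hz, hh]
      simp [hsupp z hz]
  -- integrability
  have hint_b : Integrable b := integrable_of_bdd_supp hr.le hb hbM hsupp
  have hint_h : Integrable h := by
    apply Integrable.mono' (g := (cube n x0 r).indicator fun _ => cst)
    · rw [integrable_indicator_iff (measurableSet_cube x0 r)]
      exact integrableOn_const (volume_cube_lt_top x0 hr.le).ne
    · exact (hb.mul (hdc.measurable.sub measurable_const)).aestronglyMeasurable
    · exact Filter.Eventually.of_forall key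
  -- rewrite the integral
  have hsplit : (∫ z, b z * dilate n φ t (y - z)) = ∫ z, h z := by
    have : (fun z => b z * dilate n φ t (y - z)) = fun z => h z + c * b z := by
      funext z; rw [hh]; ring
    rw [this, integral_add hint_h (hint_b.const_mul c), integral_const_mul, hmean,
      mul_zero, add_zero]
  rw [hsplit]
  have hb1 : |∫ z, h z| ≤ ∫ z, (cube n x0 r).indicator (fun _ => cst) z := by
    refine norm_integral_le_of_norm_le ?_ (Filter.Eventually.of_forall key)
    rw [integrable_indicator_iff (measurableSet_cube x0 r)]
    exact integrableOn_const (volume_cube_lt_top x0 hr.le).ne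
  have hb2 : (∫ z, (cube n x0 r).indicator (fun _ => cst) z) =
      (volume (cube n x0 r)).toReal * cst := by
    rw [integral_indicator_const _ (measurableSet_cube x0 r)]; simp [smul_eq_mul, Measure.real]
  have hcst0 : 0 ≤ cst := by positivity
  calc |∫ z, h z| ≤ (volume (cube n x0 r)).toReal * cst := by rw [← hb2]; exact hb1
    _ ≤ ((Real.sqrt n * r) ^ (n:ℝ) * vB n) * cst :=
        mul_le_mul_of_nonneg_right (volume_cube_toReal_le hn x0 hr) hcst0
    _ = (Real.sqrt n * r) ^ ((n:ℝ) + α) * vB n * M * t ^ (-((n:ℝ) + α)) := by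
        rw [hcst, Real.rpow_add (by positivity)]; ring

lemma Aalpha_nonneg (n : ℕ) (α : ℝ) (f : En n → ℝ) (y : En n) (t : ℝ) :
    0 ≤ Aalpha n α f y t := by
  apply Real.sSup_nonneg
  rintro v ⟨φ, _, rfl⟩
  exact abs_nonneg _

lemma Aalpha_eq_zero {n : ℕ} {α : ℝ} {b : En n → ℝ} {x0 : En n} {r : ℝ}
    (hsupp : ∀ z ∉ cube n x0 r, b z = 0) {y : En n} {t : ℝ} (ht : 0 < t)
    (hfar : ∀ z ∈ cube n x0 r, t < ‖y - z‖) : Aalpha n α b y t = 0 := by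
  have hset : {v | ∃ φ ∈ Calpha n α, v = |∫ z, b z * dilate n φ t (y - z)|} = {0} := by
    ext v
    simp only [Set.mem_setOf_eq, Set.mem_singleton_iff]
    constructor
    · rintro ⟨φ, hφ, rfl⟩
      have hzero : ∀ z, b z * dilate n φ t (y - z) = 0 := by
        intro z
        by_cases hz : z ∈ cube n x0 r
        · have h1 : 1 < ‖t⁻¹ • (y - z)‖ := by
            rw [norm_smul, Real.norm_eq_abs, abs_of_pos (inv_pos.2 ht)]
            have := hfar z hz
            rw [inv_mul_eq_div, lt_div_iff₀ ht, one_mul]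
            exact this
          rw [dilate, hφ.1 _ h1, mul_zero, mul_zero]
        · rw [hsupp z hz, zero_mul]
      simp [hzero]
    · rintro rfl
      exact ⟨0, zero_mem_Calpha n α, by simp [dilate]⟩
  rw [Aalpha, hset, csSup_singleton]

/-- Decay of the varying-aperture intrinsic square function `S_{α,2^j}` of an
atom-like function away from its cube. -/
theorem SalphaBeta_atom_decay (n : ℕ) (α : ℝ) (hn : 1 ≤ n) (hα0 : 0 < α) (hα1 : α ≤ 1) :
    ∃ C > 0, ∀ (j : ℕ), 1 ≤ j → ∀ (b : En n → ℝ) (M : ℝ) (x0 : En n) (r : ℝ),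
      0 < r → Measurable b → (∀ z, |b z| ≤ M) →
      (∀ z, z ∉ cube n x0 r → b z = 0) → (∫ z, b z) = 0 →
      ∀ x : En n, Real.sqrt n * r < ‖x - x0‖ →
        SalphaBeta n α (2 ^ j) b x ≤
          C * 2 ^ ((j : ℝ) * (3 * n + 2 * α) / 2) * M * r ^ ((n : ℝ) + α) /
            ‖x - x0‖ ^ ((n : ℝ) + α) := by
  haveI : Nontrivial (En n) := by
    refine Module.nontrivial_of_finrank_pos (R := ℝ) ?_
    rw [finrank_euclideanSpace_fin]; omega
  have hs : (0:ℝ) < Real.sqrt n :=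
    Real.sqrt_pos.2 (by exact_mod_cast Nat.lt_of_lt_of_le Nat.zero_lt_one hn)
  have hvB : 0 < vB n := ENNReal.toReal_pos (measure_ball_pos _ _ one_pos).ne'
    measure_ball_lt_top.ne
  set E : ℝ := 2 * (n:ℝ) + 2 * α with hE
  have hE0 : 0 < E := by positivity
  set κ : ℝ := (Real.sqrt n) ^ ((n:ℝ) + α) * vB n with hκ
  have hκ0 : 0 < κ := by positivity
  refine ⟨Real.sqrt (vB n / E) * κ * 2 ^ (2*(n:ℝ) + 2*α), by positivity, ?_⟩
  set C : ℝ := Real.sqrt (vB n / E) * κ * 2 ^ (2*(n:ℝ) + 2*α) with hC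
  intro j hj b M x0 r hr hb hbM hsupp hmean x hx
  have hM0 : 0 ≤ M := le_trans (abs_nonneg _) (hbM 0)
  set D : ℝ := ‖x - x0‖ with hD
  have hD0 : 0 < D := lt_trans (by positivity) hx
  set Q : ℝ := (2:ℝ) ^ (j + 2) with hQ
  have hQ0 : (0:ℝ) < Q := by positivity
  set t0 : ℝ := D / Q with ht0def
  have ht0 : 0 < t0 := div_pos hD0 hQ0
  set P : ℝ := κ * M * r ^ ((n:ℝ) + α) with hP
  have hP0 : 0 ≤ P := by positivity
  -- the pointwise Aalpha bound, in separated form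
  have hAle : ∀ y : En n, ∀ t : ℝ, 0 < t →
      Aalpha n α b y t ≤ P * t ^ (-((n:ℝ) + α)) := by
    intro y t ht
    refine le_trans (Aalpha_le_bound hn hα0 hr hb hbM hsupp hmean y ht) (le_of_eq ?_)
    rw [hP, hκ, Real.mul_rpow hs.le hr.le]
    ring
  set a : ℝ := -(2 * (n:ℝ) + 2 * α + 1) with ha
  have ha1 : a < -1 := by rw [ha]; nlinarith
  set cst2 : ℝ := vB n * 2 ^ ((j:ℝ) * (n:ℝ)) * P ^ 2 with hcst2
  have hcst20 : 0 ≤ cst2 := by positivity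
  set F : ℝ → ℝ := fun t => ∫ y in ball x ((2:ℝ) ^ j * t),
    (Aalpha n α b y t) ^ 2 / t ^ (n + 1) with hF
  set G : ℝ → ℝ := Set.indicator (Ici t0) (fun s => cst2 * s ^ a) with hG
  -- Step A : pointwise comparison
  have stepA : ∀ t ∈ Ioi (0:ℝ), F t ≤ G t := by
    intro t ht'
    have ht : 0 < t := ht'
    by_cases htt : t < t0
    · -- small t : F t = 0
      have hFz : F t = 0 := by
        have hFt : F t = ∫ y in ball x ((2:ℝ) ^ j * t),
            (Aalpha n α b y t) ^ 2 / t ^ (n + 1) := rfl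
        rw [hFt]
        have : ∀ y ∈ ball x ((2:ℝ) ^ j * t),
            (Aalpha n α b y t) ^ 2 / t ^ (n + 1) = (0:ℝ) := by
          intro y hy
          have hyx : ‖y - x‖ < (2:ℝ) ^ j * t := by
            rw [← dist_eq_norm]; exact mem_ball.1 hy
          have hA0 : Aalpha n α b y t = 0 := by
            apply Aalpha_eq_zero hsupp ht
            intro z hz
            have tri : D ≤ ‖x - y‖ + (‖y - z‖ + ‖z - x0‖) := by
              rw [hD, show x - x0 = (x - y) + ((y - z) + (z - x0)) by abel]
              exact le_trans (norm_add_le _ _) (by gcongr; exact norm_add_le _ _)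
            have hzx0 : ‖z - x0‖ ≤ Real.sqrt n * (r/2) := norm_le_of_mem_cube hr.le hz
            have hxy : ‖x - y‖ < (2:ℝ) ^ j * t := by rwa [norm_sub_rev]
            have h2j : (1:ℝ) ≤ 2 ^ j := one_le_pow₀ (by norm_num)
            have hQeq : Q = 4 * 2 ^ j := by rw [hQ, pow_add]; ring
            have htt' : t * Q < D := by
              rw [ht0def] at htt
              calc t * Q < (D / Q) * Q := by
                    exact mul_lt_mul_of_pos_right htt hQ0
                _ = D := div_mul_cancel₀ D hQ0.ne'
            -- √n * r < D  and  ‖z - x0‖ ≤ √n r/2 < D/2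
            have hzD : ‖z - x0‖ < D / 2 := by
              have e : Real.sqrt n * (r/2) = (Real.sqrt n * r)/2 := by ring
              rw [e] at hzx0
              linarith [hx]
            have hpt : t ≤ (2:ℝ) ^ j * t := le_mul_of_one_le_left ht.le h2j
            have h4u : 4 * ((2:ℝ) ^ j * t) < D := by
              rw [hQeq] at htt'
              linarith
            linarith [tri, hxy, hzD, hpt, h4u]
          rw [hA0]
          norm_num
        rw [setIntegral_congr_fun measurableSet_ball this, integral_zero]
      have hGz : (0:ℝ) ≤ G t := by
        rw [hG]
        apply Set.indicator_nonneg
        intro s hs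
        have hs0 : 0 < s := lt_of_lt_of_le ht0 hs
        positivity
      rw [hFz]; exact hGz
    · -- large t
      push_neg at htt
      have hGt : G t = cst2 * t ^ a :=
        Set.indicator_of_mem htt _
      set cc : ℝ := (P * t ^ (-((n:ℝ) + α))) ^ 2 / t ^ (n + 1) with hcc
      have hcc0 : 0 ≤ cc := by positivity
      have hFle : F t ≤ (volume (ball x ((2:ℝ) ^ j * t))).toReal * cc := by
        by_cases hFi : IntegrableOn (fun y : En n =>
            (Aalpha n α b y t) ^ 2 / t ^ (n + 1)) (ball x ((2:ℝ) ^ j * t)) volume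
        · have hFt : F t = ∫ y in ball x ((2:ℝ) ^ j * t),
              (Aalpha n α b y t) ^ 2 / t ^ (n + 1) := rfl
          rw [hFt]
          calc (∫ y in ball x ((2:ℝ) ^ j * t), (Aalpha n α b y t) ^ 2 / t ^ (n + 1))
              ≤ ∫ _y in ball x ((2:ℝ) ^ j * t), cc := by
                refine setIntegral_mono_on hFi
                  (integrableOn_const measure_ball_lt_top.ne) measurableSet_ball ?_
                intro y _
                have h1 : Aalpha n α b y t ≤ P * t ^ (-((n:ℝ) + α)) := hAle y t ht
                have h2 : (Aalpha n α b y t) ^ 2 ≤ (P * t ^ (-((n:ℝ) + α))) ^ 2 :=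
                  pow_le_pow_left₀ (Aalpha_nonneg n α b y t) h1 2
                rw [hcc]
                gcongr
            _ = (volume (ball x ((2:ℝ) ^ j * t))).toReal * cc := by
                rw [setIntegral_const, smul_eq_mul]; rfl
        · have hFt : F t = ∫ y in ball x ((2:ℝ) ^ j * t),
              (Aalpha n α b y t) ^ 2 / t ^ (n + 1) := rfl
          rw [hFt, integral_undef hFi]
          positivity
      have hvol : (volume (ball x ((2:ℝ) ^ j * t))).toReal = ((2:ℝ) ^ j * t) ^ n * vB n := by
        rw [Measure.addHaar_ball volume x (by positivity), ENNReal.toReal_mul,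
          ENNReal.toReal_ofReal (by positivity), vB, finrank_euclideanSpace_fin]
      rw [hGt]
      refine le_trans hFle (le_of_eq ?_)
      rw [hvol, hcc]
      -- now pure rpow algebra
      have e1 : ((2:ℝ) ^ j * t) ^ n = 2 ^ ((j:ℝ) * (n:ℝ)) * t ^ (n:ℝ) := by
        rw [mul_pow, ← pow_mul, ← Real.rpow_natCast (2:ℝ) (j*n), ← Real.rpow_natCast t n]
        push_cast
        ring_nf
      have e2 : (P * t ^ (-((n:ℝ) + α))) ^ 2 = P ^ 2 * t ^ (-(2*(n:ℝ) + 2*α)) := by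
        rw [mul_pow]
        congr 1
        rw [← Real.rpow_natCast (t ^ (-((n:ℝ) + α))) 2, ← Real.rpow_mul ht.le]
        congr 1
        push_cast
        ring
      have e3 : (t:ℝ) ^ (n + 1) = t ^ ((n:ℝ) + 1) := by
        rw [← Real.rpow_natCast t (n+1)]; push_cast; ring_nf
      rw [e1, e2, e3, hcst2]
      rw [div_eq_mul_inv, ← Real.rpow_neg ht.le]
      rw [show ((2:ℝ) ^ ((j:ℝ)*(n:ℝ)) * t ^ (n:ℝ) * vB n) * (P^2 * t ^ (-(2*(n:ℝ)+2*α)) * t ^ (-((n:ℝ)+1)))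
          = (vB n * 2 ^ ((j:ℝ)*(n:ℝ)) * P^2) * (t ^ (n:ℝ) * t ^ (-(2*(n:ℝ)+2*α)) * t ^ (-((n:ℝ)+1))) by ring]
      congr 1
      rw [← Real.rpow_add ht, ← Real.rpow_add ht, ha]
      congr 1
      ring
  -- Step B : integrability of G and integral comparison
  have hGint : IntegrableOn G (Ioi 0) volume := by
    rw [hG, IntegrableOn, integrable_indicator_iff measurableSet_Ici]
    rw [IntegrableOn, Measure.restrict_restrict measurableSet_Ici]
    have hinter : Ici t0 ∩ Ioi (0:ℝ) = Ici t0 :=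
      inter_eq_self_of_subset_left (fun s hs => lt_of_lt_of_le ht0 hs)
    rw [hinter]
    exact ((integrableOn_Ici_iff_integrableOn_Ioi).2
      (integrableOn_Ioi_rpow_of_lt ha1 ht0)).const_mul cst2
  have hImain : (∫ t in Ioi (0:ℝ), F t) ≤ ∫ t in Ioi (0:ℝ), G t := by
    by_cases hFint : IntegrableOn F (Ioi 0) volume
    · exact setIntegral_mono_on hFint hGint measurableSet_Ioi stepA
    · rw [integral_undef hFint]
      apply setIntegral_nonneg measurableSet_Ioi
      intro s _
      rw [hG]
      refine Set.indicator_nonneg (fun u hu => ?_) s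
      have hu0 : 0 < u := lt_of_lt_of_le ht0 hu
      positivity
  -- Step C : value of the integral of G
  have hGval : (∫ t in Ioi (0:ℝ), G t) = cst2 * (-t0 ^ (a + 1) / (a + 1)) := by
    rw [hG, setIntegral_indicator measurableSet_Ici]
    have hinter : Ioi (0:ℝ) ∩ Ici t0 = Ici t0 :=
      inter_eq_self_of_subset_right (fun s hs => lt_of_lt_of_le ht0 hs)
    rw [hinter, integral_Ici_eq_integral_Ioi, integral_const_mul,
      integral_Ioi_rpow_of_lt ha1 ht0]
  -- Step D : final algebra
  set RHS : ℝ := C * 2 ^ ((j : ℝ) * (3 * (n:ℝ) + 2 * α) / 2) * M * r ^ ((n : ℝ) + α) /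
      D ^ ((n : ℝ) + α) with hRHS
  have hRHS0 : 0 ≤ RHS := by positivity
  have hSB : SalphaBeta n α (2 ^ j) b x = Real.sqrt (∫ t in Ioi (0:ℝ), F t) := rfl
  have hfin : (∫ t in Ioi (0:ℝ), F t) ≤ RHS ^ 2 := by
    refine le_trans (hImain.trans (le_of_eq hGval)) (le_of_eq ?_)
    have hae : a + 1 = -E := by rw [ha, hE]; ring
    have hQE : Q ^ E = 2 ^ (((j:ℝ) + 2) * E) := by
      rw [hQ, ← Real.rpow_natCast (2:ℝ) (j + 2), ← Real.rpow_mul (by norm_num : (0:ℝ) ≤ 2)]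
      congr 1
      push_cast
      ring
    have ht0E : t0 ^ (-E) = 2 ^ (((j:ℝ) + 2) * E) / D ^ E := by
      rw [ht0def, Real.rpow_neg (by positivity), Real.div_rpow hD0.le hQ0.le, inv_div, hQE]
    have hsq1 : ((2:ℝ) ^ ((j:ℝ) * (3 * (n:ℝ) + 2 * α) / 2)) ^ 2
        = 2 ^ ((j:ℝ) * (3 * (n:ℝ) + 2 * α)) := by
      rw [← Real.rpow_natCast ((2:ℝ) ^ ((j:ℝ) * (3 * (n:ℝ) + 2 * α) / 2)) 2,
        ← Real.rpow_mul (by norm_num : (0:ℝ) ≤ 2)]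
      congr 1
      push_cast
      ring
    have hsq2 : (r ^ ((n:ℝ) + α)) ^ 2 = r ^ E := by
      rw [← Real.rpow_natCast (r ^ ((n:ℝ) + α)) 2, ← Real.rpow_mul hr.le, hE]
      congr 1
      push_cast
      ring
    have hsq3 : (D ^ ((n:ℝ) + α)) ^ 2 = D ^ E := by
      rw [← Real.rpow_natCast (D ^ ((n:ℝ) + α)) 2, ← Real.rpow_mul hD0.le, hE]
      congr 1
      push_cast
      ring
    have hsqC : C ^ 2 = (vB n / E) * κ ^ 2 * 2 ^ (2 * E) := by
      rw [hC, mul_pow, mul_pow, Real.sq_sqrt (by positivity)]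
      congr 1
      rw [← Real.rpow_natCast ((2:ℝ) ^ (2 * (n:ℝ) + 2 * α)) 2,
        ← Real.rpow_mul (by norm_num : (0:ℝ) ≤ 2), hE]
      congr 1
      push_cast
      ring
    have hP2 : P ^ 2 = κ ^ 2 * M ^ 2 * r ^ E := by
      rw [hP, mul_pow, mul_pow, hsq2]
    have h2pow : (2:ℝ) ^ ((j:ℝ) * (n:ℝ)) * (2:ℝ) ^ (((j:ℝ) + 2) * E)
        = (2:ℝ) ^ ((j:ℝ) * (3 * (n:ℝ) + 2 * α)) * (2:ℝ) ^ (2 * E) := by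
      rw [← Real.rpow_add (by norm_num : (0:ℝ) < 2), ← Real.rpow_add (by norm_num : (0:ℝ) < 2), hE]
      congr 1
      ring
    have hRHS2 : RHS ^ 2 = (vB n / E) * κ ^ 2 * 2 ^ (2 * E) *
        ((2:ℝ) ^ ((j:ℝ) * (3 * (n:ℝ) + 2 * α)) * (M ^ 2 * (r ^ E / D ^ E))) := by
      rw [hRHS, div_pow, mul_pow, mul_pow, mul_pow, hsqC, hsq1, hsq2, hsq3]
      ring
    rw [hae, neg_div_neg_eq, ht0E, hcst2, hP2, hRHS2]
    linear_combination (vB n * κ ^ 2 * M ^ 2 * r ^ E / D ^ E / E) * h2pow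
  rw [hSB]
  calc Real.sqrt (∫ t in Ioi (0:ℝ), F t) ≤ Real.sqrt (RHS ^ 2) := Real.sqrt_le_sqrt hfin
    _ = RHS := Real.sqrt_sq hRHS0

end
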